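/- Let f : X × [0,1] → [0,1] and let L be a loss function over X that is f-proper. Fix a distribution D over X × Y, a predictor p̃ : X → [0,1], a group g ⊆ X with Pr_D[x ∈ g] > 0, a predictor h, and ε', δ' ∈ (0,1). Suppose k_G ∈ ℕ is such that for every integer r ≥ k_G and every distribution D' over X × Y, with probability at least 1 − δ' over an i.i.d. sample S' of size r from D', both |L_{S'}(h) − L_{D'}(h)| ≤ ε' and |L_{S'}(f∘p̃) − L_{D'}(f∘p̃)| ≤ ε' hold; and suppose k ∈ ℕ is such that with probability at least 1 − δ', an i.i.d. sample of size k from the X-marginal of D contains at least k_G points lying in g. Then the k-sample distinguisher A_{g,h,ε'} accepts with probability at least 1 − 2δ' on inputs generated from the modeled distribution: Pr_{(x_i, y_i)_{i≤k} ~ D̃^k}[A_{g,h,ε'}((x_i, y_i, p̃(x_i))_{i≤k}) = 1] ≥ 1 − 2δ', where D̃ = D(p̃). -/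

import Mathlib

open scoped ENNReal
open scoped Classical

noncomputable section

namespace MultiPAC

variable {X : Type*}

def Supp (D : PMF (X × Bool)) : Set X := {x | ∃ y, D (x, y) ≠ 0}

structure LossFunction (X : Type*) where
  loss : PMF (X × Bool) → (X → unitInterval) → unitInterval
  locality : ∀ (D : PMF (X × Bool)) (h h' : X → unitInterval),
    (∀ x ∈ Supp D, h x = h' x) → loss D h = loss D h'

def condOn (D : PMF (X × Bool)) (g : Set X) (hg : ∃ z : X × Bool, z.1 ∈ g ∧ D z ≠ 0) :
    PMF (X × Bool) :=
  D.filter {z | z.1 ∈ g} hg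

def empDist {m : ℕ} (hm : m ≠ 0) (S : Fin m → X × Bool) : PMF (X × Bool) :=
  haveI : NeZero m := ⟨hm⟩
  (PMF.uniformOfFintype (Fin m)).map S

def iidProb {α : Type*} {m : ℕ} (D : PMF α) (E : Set (Fin m → α)) : ℝ≥0∞ :=
  ∑' S : Fin m → α, E.indicator (fun T => ∏ i, D (T i)) S

/-- Boundedness by a polynomial in `1/ε`, `1/δ` and `log k`. -/
def PolyBound3 (M : ℝ → ℝ → ℕ → ℕ) : Prop :=
  ∃ (C : ℝ) (n : ℕ), ∀ ε δ : ℝ, ε ∈ Set.Ioo (0:ℝ) 1 → δ ∈ Set.Ioo (0:ℝ) 1 → ∀ k : ℕ,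
    (M ε δ k : ℝ) ≤ C * (1/ε + 1/δ + Real.log k + 1) ^ n

/-- `L` has the uniform convergence property with sample-complexity function `M`. -/
def UniformConvergenceWith (L : LossFunction X) (M : ℝ → ℝ → ℕ → ℕ) : Prop :=
  ∀ (H : Finset (X → unitInterval)) (ε δ : ℝ), ε ∈ Set.Ioo (0:ℝ) 1 → δ ∈ Set.Ioo (0:ℝ) 1 →
    ∀ (D : PMF (X × Bool)) (m : ℕ) (hm : m ≠ 0), M ε δ H.card ≤ m →
      1 - ENNReal.ofReal δ ≤ iidProb D {S : Fin m → X × Bool |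
        ∀ h ∈ H, |(L.loss (empDist hm S) h : ℝ) - (L.loss D h : ℝ)| ≤ ε}

/-- `L` has the uniform convergence property (w.r.t. finite classes). -/
def UniformConvergence (L : LossFunction X) : Prop :=
  ∃ M : ℝ → ℝ → ℕ → ℕ, PolyBound3 M ∧ UniformConvergenceWith L M

/-- `L` is unambiguous: on every distribution supported on a single point `x` there is a
unique value `v` such that every predictor taking value `v` at `x` minimizes the loss. -/
def Unambiguous (L : LossFunction X) : Prop :=
  ∀ (D : PMF (X × Bool)) (x : X), Supp D = {x} →
    ∃! v : unitInterval, ∀ h : X → unitInterval, h x = v →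
      ∀ h' : X → unitInterval, L.loss D h ≤ L.loss D h'

/-- `L` is multi-group compatible. -/
def MultiGroupCompatible (L : LossFunction X) : Prop :=
  ∀ (D : PMF (X × Bool)) (H : Set (X → unitInterval)) (G : Set (Set X)),
    ∃ hstar : X → unitInterval, ∀ g ∈ G, ∀ (hg : ∃ z : X × Bool, z.1 ∈ g ∧ D z ≠ 0),
      ∀ h' ∈ H, L.loss (condOn D g hg) hstar ≤ L.loss (condOn D g hg) h'

/-- The probability mass that `D` puts on the event `x ∈ g`. -/
def groupMass (D : PMF (X × Bool)) (g : Set X) : ℝ≥0∞ := D.toOuterMeasure {z | z.1 ∈ g}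

/-- The probability (over an i.i.d. size-`m` sample from `D` and the internal randomness of
the algorithm `A`) that the output predictor of `A` is in `Good`. -/
def algSuccess {m : ℕ} (D : PMF (X × Bool)) (A : (Fin m → X × Bool) → PMF (X → unitInterval))
    (Good : (X → unitInterval) → Prop) : ℝ≥0∞ :=
  ∑' S : Fin m → X × Bool, (∏ i, D (S i)) * (A S).toOuterMeasure {h | Good h}

/-- Boundedness by a polynomial in `1/ε`, `1/δ`, `1/γ`, `log s` and `log t`. -/
def PolyBound5 (M : ℝ → ℝ → ℝ → ℕ → ℕ → ℕ) : Prop :=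
  ∃ (C : ℝ) (n : ℕ), ∀ ε δ γ : ℝ, ε ∈ Set.Ioo (0:ℝ) 1 → δ ∈ Set.Ioo (0:ℝ) 1 →
    γ ∈ Set.Ioo (0:ℝ) 1 → ∀ s t : ℕ,
      (M ε δ γ s t : ℝ) ≤ C * (1/ε + 1/δ + 1/γ + Real.log s + Real.log t + 1) ^ n

/-- `L` is multi-group agnostic PAC learnable. -/
def MultiGroupLearnable (L : LossFunction X) : Prop :=
  ∃ (A : (m : ℕ) → (Fin m → X × Bool) → PMF (X → unitInterval))
    (M : ℝ → ℝ → ℝ → ℕ → ℕ → ℕ), PolyBound5 M ∧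
    ∀ (ε δ γ : ℝ), ε ∈ Set.Ioo (0:ℝ) 1 → δ ∈ Set.Ioo (0:ℝ) 1 → γ ∈ Set.Ioo (0:ℝ) 1 →
    ∀ (H : Finset (X → unitInterval)) (G : Finset (Set X)) (D : PMF (X × Bool)) (m : ℕ),
      M ε δ γ H.card G.card ≤ m →
      1 - ENNReal.ofReal δ ≤ algSuccess D (A m) (fun h =>
        ∀ g ∈ G, ENNReal.ofReal γ ≤ groupMass D g →
          ∀ (hg : ∃ z : X × Bool, z.1 ∈ g ∧ D z ≠ 0),
          ∀ h' ∈ H, (L.loss (condOn D g hg) h : ℝ) ≤ (L.loss (condOn D g hg) h' : ℝ) + ε)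

/-- `Pr_D[y = 1 ∣ X = x]`, as an element of `[0,1]`. -/
def condProb (D : PMF (X × Bool)) (x : X) : unitInterval :=
  ⟨(D (x, true)).toReal / ((D (x, true)).toReal + (D (x, false)).toReal), by
    constructor
    · positivity
    · rcases eq_or_lt_of_le (add_nonneg ENNReal.toReal_nonneg ENNReal.toReal_nonneg :
        (0:ℝ) ≤ (D (x, true)).toReal + (D (x, false)).toReal) with hz | hz
      · rw [← hz, div_zero]
        exact zero_le_one
      · rw [div_le_one hz]
        exact le_add_of_nonneg_right ENNReal.toReal_nonneg⟩

/-- The predictor `h_D` : `h_D x = f (x, p_D x)` on the support of `D`, and `0` elsewhere. -/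
def bayesPred (f : X × unitInterval → unitInterval) (D : PMF (X × Bool)) :
    X → unitInterval :=
  fun x => if x ∈ Supp D then f (x, condProb D x) else 0

/-- `L` is `f`-proper. -/
def FProper (f : X × unitInterval → unitInterval) (L : LossFunction X) : Prop :=
  ∀ (D : PMF (X × Bool)) (h : X → unitInterval), L.loss D (bayesPred f D) ≤ L.loss D h


/-- The modeled distribution `D̃ = D(p̃)`: draw `x` from the `X`-marginal of `D`, then draw
`y ∈ {0,1}` with `Pr[y = 1] = p̃ x`. -/
def modeled (D : PMF (X × Bool)) (pt : X → unitInterval) : PMF (X × Bool) :=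
  (D.map Prod.fst).bind fun x =>
    (PMF.bernoulli (Real.toNNReal (pt x)) (Real.toNNReal_le_one.mpr (pt x).2.2)).map
      fun y => (x, y)

/-- The empirical distribution of the subsample of an input sequence consisting of the
labeled pairs whose feature lies in `g` (with multiplicity). -/
def subEmp {k : ℕ} (inp : Fin k → X × Bool × unitInterval) (g : Set X)
    (hne : (Finset.univ.filter fun i : Fin k => (inp i).1 ∈ g).Nonempty) :
    PMF (X × Bool) :=
  (PMF.uniformOfFinset _ hne).map fun i => ((inp i).1, (inp i).2.1)

/-- The predictor `f_g` defined from an input sequence: `f_g x = f (x, p_i)` for the smallest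
`i` with `x_i = x`, and `0` if no such `i` exists. -/
def fg {k : ℕ} (f : X × unitInterval → unitInterval)
    (inp : Fin k → X × Bool × unitInterval) : X → unitInterval := fun x =>
  if hx : (Finset.univ.filter fun i : Fin k => (inp i).1 = x).Nonempty then
    f (x, (inp ((Finset.univ.filter fun i : Fin k => (inp i).1 = x).min' hx)).2.2)
  else 0

/-- The `k`-sample distinguisher `A_{g,h,α}`: accepts iff on the subsample of points lying in
`g`, the empirical loss of `f_g` is at most that of `h` plus `2α` (accepting by convention when
the subsample is empty). -/
def distinguisher (L : LossFunction X) (f : X × unitInterval → unitInterval) (g : Set X)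
    (h : X → unitInterval) (α : ℝ) {k : ℕ} (inp : Fin k → X × Bool × unitInterval) : Bool :=
  if hne : (Finset.univ.filter fun i : Fin k => (inp i).1 ∈ g).Nonempty then
    decide ((L.loss (subEmp inp g hne) (fg f inp) : ℝ) ≤
      (L.loss (subEmp inp g hne) h : ℝ) + 2 * α)
  else true

/-! ### Infrastructure lemmas -/

section Infra

variable {Z : Type*}

lemma tsum_prod_fin : ∀ {n : ℕ} (w : Fin n → Z → ℝ≥0∞),
    (∑' S : Fin n → Z, ∏ i, w i (S i)) = ∏ i, ∑' z, w i z := by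
  intro n
  induction n with
  | zero =>
    intro w
    simp only [Finset.univ_eq_empty, Finset.prod_empty]
    rw [tsum_eq_single (fun i => (Fin.elim0 i : Z))]
    intro S hS
    exact absurd (funext fun i => i.elim0) hS
  | succ n ih =>
    intro w
    rw [← (Fin.consEquiv fun _ => Z).tsum_eq]
    simp only [Fin.consEquiv_apply, Fin.prod_univ_succ, Fin.cons_zero, Fin.cons_succ]
    have hp := ENNReal.tsum_prod (f := fun (a : Z) (b : Fin n → Z) =>
      w 0 a * ∏ x : Fin n, w x.succ (b x))
    rw [hp]
    calc (∑' (a : Z) (S : Fin n → Z), w 0 a * ∏ i : Fin n, w i.succ (S i))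
        = ∑' (a : Z), w 0 a * ∑' (S : Fin n → Z), ∏ i : Fin n, w i.succ (S i) := by
          simp [ENNReal.tsum_mul_left]
      _ = (∑' z, w 0 z) * ∏ i : Fin n, ∑' z, w i.succ z := by
          rw [ih fun i => w i.succ, ENNReal.tsum_mul_right]

end Infra

section Infra2

variable {Z : Type*} {m : ℕ}

lemma iidProb_univ (D : PMF Z) : iidProb (m := m) D Set.univ = 1 := by
  unfold iidProb
  simp only [Set.indicator_univ]
  rw [tsum_prod_fin (fun _ z => D z)]
  simp [PMF.tsum_coe]

lemma iidProb_add_compl (D : PMF Z) (E : Set (Fin m → Z)) :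
    iidProb D E + iidProb D Eᶜ = 1 := by
  unfold iidProb
  rw [← ENNReal.tsum_add]
  rw [← iidProb_univ (m := m) D]
  unfold iidProb
  simp only [Set.indicator_univ]
  congr 1
  funext S
  have := congrFun (Set.indicator_self_add_compl E (fun T : Fin m → Z => ∏ i, D (T i))) S
  simpa using this

lemma iidProb_mono (D : PMF Z) {E F : Set (Fin m → Z)} (hEF : E ⊆ F) :
    iidProb D E ≤ iidProb D F := by
  refine Summable.tsum_le_tsum (fun S => ?_) ENNReal.summable ENNReal.summable
  exact Set.indicator_le_indicator_of_subset hEF (fun _ => zero_le) S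

lemma iidProb_union_le (D : PMF Z) (E F : Set (Fin m → Z)) :
    iidProb D (E ∪ F) ≤ iidProb D E + iidProb D F := by
  unfold iidProb
  rw [← ENNReal.tsum_add]
  refine Summable.tsum_le_tsum (fun S => ?_) ENNReal.summable ENNReal.summable
  by_cases hE : S ∈ E
  · rw [Set.indicator_of_mem (Set.mem_union_left _ hE), Set.indicator_of_mem hE]
    exact le_add_of_nonneg_right zero_le
  by_cases hF : S ∈ F
  · rw [Set.indicator_of_mem (Set.mem_union_right _ hF), Set.indicator_of_mem hF]
    exact le_add_of_nonneg_left zero_le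
  · rw [Set.indicator_of_notMem (fun hc => hc.elim hE hF)]
    exact zero_le

lemma iidProb_biUnion_le (D : PMF Z) {ι : Type*} (t : Finset ι) (E : ι → Set (Fin m → Z)) :
    iidProb D (⋃ A ∈ t, E A) ≤ ∑ A ∈ t, iidProb D (E A) := by
  classical
  induction t using Finset.induction with
  | empty => simp [iidProb]
  | @insert A t' hA ih =>
    rw [Finset.set_biUnion_insert, Finset.sum_insert hA]
    exact le_trans (iidProb_union_le D _ _) (add_le_add_right ih _)

lemma one_sub_one_sub_le (d : ℝ≥0∞) : 1 - (1 - d) ≤ d := by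
  rcases le_total d 1 with hd | hd
  · rw [ENNReal.sub_sub_cancel ENNReal.one_ne_top hd]
  · exact le_trans tsub_le_self hd

lemma compl_prob_le (D : PMF Z) (E : Set (Fin m → Z)) (d : ℝ≥0∞)
    (hE : 1 - d ≤ iidProb D E) : iidProb D Eᶜ ≤ d := by
  have h1 := iidProb_add_compl D E
  have hfin : iidProb D E ≠ ∞ := by
    intro hc
    rw [hc] at h1
    simp at h1
  have h2 : iidProb D Eᶜ = 1 - iidProb D E :=
    ENNReal.eq_sub_of_add_eq hfin (by rw [add_comm]; exact h1)
  calc iidProb D Eᶜ = 1 - iidProb D E := h2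
    _ ≤ 1 - (1 - d) := tsub_le_tsub_left hE 1
    _ ≤ d := one_sub_one_sub_le d

end Infra2

section Infra3

variable {X : Type*}

lemma map_pair_apply (x' : X) (q : PMF Bool) (z : X × Bool) :
    (q.map fun y => (x', y)) z = if z.1 = x' then q z.2 else 0 := by
  rw [PMF.map_apply, tsum_bool]
  rcases z with ⟨xz, bz⟩
  by_cases hx : xz = x'
  · subst hx; cases bz <;> simp [Prod.ext_iff]
  · simp [Prod.ext_iff, hx]

lemma modeled_apply (D : PMF (X × Bool)) (pt : X → unitInterval) (x : X) (b : Bool) :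
    modeled D pt (x, b) = (D.map Prod.fst) x *
      ((PMF.bernoulli (Real.toNNReal (pt x)) (Real.toNNReal_le_one.mpr (pt x).2.2)) b) := by
  unfold modeled
  rw [PMF.bind_apply]
  simp only [map_pair_apply]
  rw [tsum_eq_single x]
  · simp
  · intro x' hx'
    simp [Ne.symm hx']

lemma map_fst_apply (μ : PMF (X × Bool)) (x : X) :
    (μ.map Prod.fst) x = μ (x, true) + μ (x, false) := by
  rw [PMF.map_apply]
  have hp := ENNReal.tsum_prod (f := fun (x' : X) (b : Bool) =>
    if x = x' then μ (x', b) else 0)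
  have : (∑' a : X × Bool, if x = a.1 then μ a else 0)
      = ∑' (a : X) (b : Bool), if x = a then μ (a, b) else 0 := by
    rw [← hp]
  rw [this]
  rw [tsum_eq_single x]
  · rw [tsum_bool]
    simp [add_comm]
  · intro x' hx'
    simp [Ne.symm hx']

lemma marginal_modeled (D : PMF (X × Bool)) (pt : X → unitInterval) :
    (modeled D pt).map Prod.fst = D.map Prod.fst := by
  unfold modeled
  rw [PMF.map_bind]
  have : ∀ x : X, PMF.map Prod.fst
      ((PMF.bernoulli (Real.toNNReal (pt x)) (Real.toNNReal_le_one.mpr (pt x).2.2)).map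
        fun y => (x, y)) = PMF.pure x := by
    intro x
    rw [PMF.map_comp]
    exact PMF.map_const _ _
  simp only [this]
  exact PMF.bind_pure _

end Infra3

section Infra4

variable {X : Type*}

lemma condProb_modeled (D : PMF (X × Bool)) (pt : X → unitInterval) (x : X)
    (hx : (D.map Prod.fst) x ≠ 0) : condProb (modeled D pt) x = pt x := by
  have hfin : (D.map Prod.fst) x ≠ ∞ := ne_of_lt (lt_of_le_of_lt (PMF.coe_le_one _ x)
    ENNReal.one_lt_top)
  set m := (D.map Prod.fst) x with hm
  have ht : (modeled D pt (x, true)).toReal = m.toReal * (pt x : ℝ) := by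
    rw [modeled_apply, PMF.bernoulli_apply]
    simp only [cond_true]
    rw [ENNReal.toReal_mul, ENNReal.coe_toReal, Real.coe_toNNReal _ (pt x).2.1]
  have h1s : (((1 : NNReal) - Real.toNNReal (pt x) : NNReal) : ℝ≥0∞) = ENNReal.ofReal (1 - (pt x : ℝ)) := by
    rw [ENNReal.coe_sub, ENNReal.coe_one]
    show (1 : ℝ≥0∞) - ENNReal.ofReal (pt x) = _
    rw [ENNReal.ofReal_sub _ (pt x).2.1, ENNReal.ofReal_one]
  have hfalse : (modeled D pt (x, false)).toReal = m.toReal * (1 - (pt x : ℝ)) := by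
    rw [modeled_apply, PMF.bernoulli_apply]
    simp only [cond_false]
    rw [h1s, ENNReal.toReal_mul, ENNReal.toReal_ofReal (by linarith [(pt x).2.2])]
  have hmr : m.toReal ≠ 0 := ENNReal.toReal_ne_zero.mpr ⟨hx, hfin⟩
  apply Subtype.ext
  show (modeled D pt (x, true)).toReal /
    ((modeled D pt (x, true)).toReal + (modeled D pt (x, false)).toReal) = (pt x : ℝ)
  rw [ht, hfalse]
  have : m.toReal * (pt x : ℝ) + m.toReal * (1 - (pt x : ℝ)) = m.toReal := by ring
  rw [this]
  field_simp

lemma groupMass_eq_tsum (μ : PMF (X × Bool)) (g : Set X) :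
    groupMass μ g = ∑' z : X × Bool, Set.indicator {z : X × Bool | z.1 ∈ g} (⇑μ) z :=
  PMF.toOuterMeasure_apply μ _

lemma groupMass_ne_zero (μ : PMF (X × Bool)) (g : Set X)
    (hg : ∃ z : X × Bool, z.1 ∈ g ∧ μ z ≠ 0) : groupMass μ g ≠ 0 := by
  obtain ⟨z0, hz0g, hz0⟩ := hg
  rw [groupMass_eq_tsum]
  intro hc
  have hle := ENNReal.le_tsum (f := fun z => Set.indicator {z : X × Bool | z.1 ∈ g} (⇑μ) z) z0
  rw [hc] at hle
  rw [Set.indicator_of_mem (show z0 ∈ {z : X × Bool | z.1 ∈ g} from hz0g)] at hle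
  exact hz0 (le_antisymm (le_of_le_of_eq hle rfl) zero_le)

lemma groupMass_le_one (μ : PMF (X × Bool)) (g : Set X) : groupMass μ g ≤ 1 := by
  rw [groupMass_eq_tsum, ← PMF.tsum_coe μ]
  exact Summable.tsum_le_tsum (fun z => Set.indicator_le_self _ _ z) ENNReal.summable ENNReal.summable

lemma condOn_apply (μ : PMF (X × Bool)) (g : Set X) (hg : ∃ z : X × Bool, z.1 ∈ g ∧ μ z ≠ 0)
    (z : X × Bool) :
    condOn μ g hg z = Set.indicator {z : X × Bool | z.1 ∈ g} (⇑μ) z * (groupMass μ g)⁻¹ := by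
  rw [groupMass_eq_tsum]
  exact PMF.filter_apply _ z

lemma condOn_apply_of_mem (μ : PMF (X × Bool)) (g : Set X)
    (hg : ∃ z : X × Bool, z.1 ∈ g ∧ μ z ≠ 0) {z : X × Bool} (hz : z.1 ∈ g) :
    condOn μ g hg z = μ z * (groupMass μ g)⁻¹ := by
  rw [condOn_apply, Set.indicator_of_mem (show z ∈ {z : X × Bool | z.1 ∈ g} from hz)]

lemma condOn_apply_of_not_mem (μ : PMF (X × Bool)) (g : Set X)
    (hg : ∃ z : X × Bool, z.1 ∈ g ∧ μ z ≠ 0) {z : X × Bool} (hz : z.1 ∉ g) :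
    condOn μ g hg z = 0 := by
  rw [condOn_apply, Set.indicator_of_notMem (show z ∉ {z : X × Bool | z.1 ∈ g} from hz), zero_mul]

lemma mul_groupMass (μ : PMF (X × Bool)) (g : Set X)
    (hg : ∃ z : X × Bool, z.1 ∈ g ∧ μ z ≠ 0) {z : X × Bool} (hz : z.1 ∈ g) :
    condOn μ g hg z * groupMass μ g = μ z := by
  rw [condOn_apply_of_mem μ g hg hz, mul_assoc,
    ENNReal.inv_mul_cancel (groupMass_ne_zero μ g hg)
      (ne_of_lt (lt_of_le_of_lt (groupMass_le_one μ g) ENNReal.one_lt_top)), mul_one]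

lemma condProb_condOn (μ : PMF (X × Bool)) (g : Set X)
    (hg : ∃ z : X × Bool, z.1 ∈ g ∧ μ z ≠ 0) (x : X) (hxg : x ∈ g) :
    condProb (condOn μ g hg) x = condProb μ x := by
  have hq0 : groupMass μ g ≠ 0 := groupMass_ne_zero μ g hg
  have hqtop : groupMass μ g ≠ ∞ :=
    ne_of_lt (lt_of_le_of_lt (groupMass_le_one μ g) ENNReal.one_lt_top)
  set c := (groupMass μ g)⁻¹ with hc
  have hc0 : c ≠ 0 := ENNReal.inv_ne_zero.mpr hqtop
  have hctop : c ≠ ∞ := ENNReal.inv_ne_top.mpr hq0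
  have hcr : (0:ℝ) < c.toReal := ENNReal.toReal_pos hc0 hctop
  have ht : condOn μ g hg (x, true) = μ (x, true) * c := condOn_apply_of_mem μ g hg hxg
  have hfa : condOn μ g hg (x, false) = μ (x, false) * c := condOn_apply_of_mem μ g hg hxg
  apply Subtype.ext
  show (condOn μ g hg (x, true)).toReal /
      ((condOn μ g hg (x, true)).toReal + (condOn μ g hg (x, false)).toReal)
    = (μ (x, true)).toReal / ((μ (x, true)).toReal + (μ (x, false)).toReal)
  rw [ht, hfa, ENNReal.toReal_mul, ENNReal.toReal_mul]
  rw [← add_mul]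
  rw [mul_div_mul_right _ _ (ne_of_gt hcr)]

end Infra4

section Infra5

variable {X : Type*}

lemma loss_fpt_le (f : X × unitInterval → unitInterval) (L : LossFunction X)
    (hf : FProper f L) (μ : PMF (X × Bool)) (pt : X → unitInterval)
    (hpt : ∀ x ∈ Supp μ, condProb μ x = pt x) (h' : X → unitInterval) :
    L.loss μ (fun x => f (x, pt x)) ≤ L.loss μ h' := by
  have hloc : L.loss μ (fun x => f (x, pt x)) = L.loss μ (bayesPred f μ) := by
    apply L.locality
    intro x hx
    unfold bayesPred
    rw [if_pos hx, hpt x hx]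
  rw [hloc]
  exact hf μ h'

lemma uniformOfFinset_eq_map {α : Type*} [LinearOrder α] (A : Finset α) (hne : A.Nonempty) :
    haveI : NeZero A.card := ⟨Finset.card_ne_zero.mpr hne⟩
    PMF.uniformOfFinset A hne =
      (PMF.uniformOfFintype (Fin A.card)).map (fun j => (A.orderIsoOfFin rfl j : α)) := by
  haveI : NeZero A.card := ⟨Finset.card_ne_zero.mpr hne⟩
  ext a
  rw [PMF.map_apply, PMF.uniformOfFinset_apply, tsum_fintype]
  simp only [PMF.uniformOfFintype_apply, Fintype.card_fin]
  by_cases ha : a ∈ A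
  · rw [if_pos ha]
    rw [Finset.sum_eq_single ((A.orderIsoOfFin rfl).symm ⟨a, ha⟩)]
    · rw [if_pos]
      simp
    · intro j _ hj
      rw [if_neg]
      intro hc
      apply hj
      have : A.orderIsoOfFin rfl j = ⟨a, ha⟩ := Subtype.ext hc.symm
      rw [← this]
      simp
    · intro hc
      exact absurd (Finset.mem_univ _) hc
  · rw [if_neg ha]
    symm
    apply Finset.sum_eq_zero
    intro j _
    rw [if_neg]
    intro hc
    exact ha (hc ▸ (A.orderIsoOfFin rfl j).2)

lemma iid_split {Z : Type*} {k : ℕ} (w : Z → ℝ≥0∞) (A : Finset (Fin k))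
    (P : ({i : Fin k // i ∈ A} → Z) → Prop) (Q : ({i : Fin k // i ∉ A} → Z) → Prop) :
    (∑' S : Fin k → Z,
        if P (fun i => S i.1) ∧ Q (fun i => S i.1) then ∏ i, w (S i) else 0)
    = (∑' U : {i : Fin k // i ∈ A} → Z, if P U then ∏ i, w (U i) else 0) *
      (∑' V : {i : Fin k // i ∉ A} → Z, if Q V then ∏ i, w (V i) else 0) := by
  classical
  set e := Equiv.piEquivPiSubtypeProd (fun i : Fin k => i ∈ A) (fun _ => Z) with he
  rw [← e.symm.tsum_eq]
  have hUV : ∀ (c : ({i : Fin k // i ∈ A} → Z) × ({i : Fin k // i ∉ A} → Z)),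
      (fun i : {i : Fin k // i ∈ A} => e.symm c i.1) = c.1 ∧
      (fun i : {i : Fin k // i ∉ A} => e.symm c i.1) = c.2 := by
    intro c
    constructor <;> funext i <;>
      simp [he, Equiv.piEquivPiSubtypeProd_symm_apply, i.2]
  have hprod : ∀ (c : ({i : Fin k // i ∈ A} → Z) × ({i : Fin k // i ∉ A} → Z)),
      (∏ i, w (e.symm c i)) = (∏ i, w (c.1 i)) * (∏ i, w (c.2 i)) := by
    intro c
    rw [← Fintype.prod_subtype_mul_prod_subtype (fun i : Fin k => i ∈ A)
      (fun i => w (e.symm c i))]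
    congr 1
    · refine Finset.prod_congr (congrArg (fun inst => @Finset.univ _ inst)
        (Subsingleton.elim _ _)) fun i _ => by rw [congrFun (hUV c).1 i]
    · refine Finset.prod_congr (congrArg (fun inst => @Finset.univ _ inst)
        (Subsingleton.elim _ _)) fun i _ => by rw [congrFun (hUV c).2 i]
  have hsummand : ∀ (c : ({i : Fin k // i ∈ A} → Z) × ({i : Fin k // i ∉ A} → Z)),
      (if P (fun i : {i : Fin k // i ∈ A} => e.symm c i.1) ∧
          Q (fun i : {i : Fin k // i ∉ A} => e.symm c i.1)
        then ∏ i, w (e.symm c i) else 0)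
      = (if P c.1 then ∏ i, w (c.1 i) else 0) * (if Q c.2 then ∏ i, w (c.2 i) else 0) := by
    intro c
    rw [(hUV c).1, (hUV c).2, hprod c]
    by_cases hP : P c.1 <;> by_cases hQ : Q c.2 <;> simp [hP, hQ]
  calc (∑' c, if P (fun i : {i : Fin k // i ∈ A} => e.symm c i.1) ∧
          Q (fun i : {i : Fin k // i ∉ A} => e.symm c i.1) then ∏ i, w (e.symm c i) else 0)
      = ∑' c : ({i : Fin k // i ∈ A} → Z) × ({i : Fin k // i ∉ A} → Z),
          (if P c.1 then ∏ i, w (c.1 i) else 0) * (if Q c.2 then ∏ i, w (c.2 i) else 0) := by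
        exact tsum_congr hsummand
    _ = ∑' (U : {i : Fin k // i ∈ A} → Z) (V : {i : Fin k // i ∉ A} → Z),
          (if P U then ∏ i, w (U i) else 0) * (if Q V then ∏ i, w (V i) else 0) := by
        exact ENNReal.tsum_prod (f := fun (U : {i : Fin k // i ∈ A} → Z)
          (V : {i : Fin k // i ∉ A} → Z) =>
          (if P U then ∏ i, w (U i) else 0) * (if Q V then ∏ i, w (V i) else 0))
    _ = _ := by
        simp only [ENNReal.tsum_mul_left]
        rw [ENNReal.tsum_mul_right]

end Infra5

section Infra6

variable {X : Type*}

lemma iid_fst {k : ℕ} (μ : PMF (X × Bool)) (E : Set (Fin k → X)) :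
    iidProb (μ.map Prod.fst) E = iidProb μ {S : Fin k → X × Bool | (fun i => (S i).1) ∈ E} := by
  classical
  unfold iidProb
  simp only [Set.indicator_apply]
  set ee := Equiv.arrowProdEquivProdArrow (Fin k) (fun _ => X) (fun _ => Bool) with hee
  rw [← ee.symm.tsum_eq]
  have hsymm : ∀ (c : (Fin k → X) × (Fin k → Bool)) (i : Fin k),
      ee.symm c i = (c.1 i, c.2 i) := fun c i => rfl
  have hstep : ∀ (c : (Fin k → X) × (Fin k → Bool)),
      (if ee.symm c ∈ {S : Fin k → X × Bool | (fun i => (S i).1) ∈ E}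
        then ∏ i, μ (ee.symm c i) else 0)
      = (if c.1 ∈ E then ∏ i, μ (c.1 i, c.2 i) else 0) := by
    intro c
    rfl
  rw [tsum_congr hstep]
  have hp := ENNReal.tsum_prod (f := fun (T : Fin k → X) (σ : Fin k → Bool) =>
    if T ∈ E then ∏ i, μ (T i, σ i) else 0)
  rw [hp]
  apply tsum_congr
  intro T
  by_cases hT : T ∈ E
  · simp only [hT, if_true]
    rw [tsum_prod_fin (fun i b => μ (T i, b))]
    apply Finset.prod_congr rfl
    intro i _
    rw [map_fst_apply, tsum_bool, add_comm]
  · simp [hT]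

end Infra6

section Infra7

variable {X : Type*}

lemma iid_PA_sum {k : ℕ} (μ : PMF (X × Bool)) (g : Set X) :
    ∑ A : Finset (Fin k),
      iidProb μ {S : Fin k → X × Bool | ∀ i, i ∈ A ↔ (S i).1 ∈ g} = 1 := by
  classical
  unfold iidProb
  rw [← Summable.tsum_finsetSum (fun A _ => ENNReal.summable)]
  have hpt : ∀ S : Fin k → X × Bool,
      (∑ A : Finset (Fin k),
        Set.indicator {S : Fin k → X × Bool | ∀ i, i ∈ A ↔ (S i).1 ∈ g}
          (fun T => ∏ i, μ (T i)) S) = ∏ i, μ (S i) := by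
    intro S
    rw [Finset.sum_eq_single (Finset.univ.filter fun i => (S i).1 ∈ g)]
    · rw [Set.indicator_of_mem]
      intro i
      simp [Finset.mem_filter]
    · intro A _ hA
      rw [Set.indicator_of_notMem]
      intro hc
      apply hA
      ext i
      simp [Finset.mem_filter, hc i]
    · intro hc
      exact absurd (Finset.mem_univ _) hc
  rw [tsum_congr hpt, tsum_prod_fin (fun _ z => μ z)]
  simp [PMF.tsum_coe]

lemma iid_EA_bound {k : ℕ} (μ ν : PMF (X × Bool)) (g : Set X) (q : ℝ≥0∞)
    (hμν : ∀ z : X × Bool, z.1 ∈ g → ν z * q = μ z)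
    (hν0 : ∀ z : X × Bool, z.1 ∉ g → ν z = 0)
    (A : Finset (Fin k)) (Bad : Set (Fin A.card → X × Bool)) (d : ℝ≥0∞)
    (hBad : iidProb ν Bad ≤ d) :
    iidProb μ {S : Fin k → X × Bool | (∀ i, i ∈ A ↔ (S i).1 ∈ g) ∧
        (fun j => S ((A.orderIsoOfFin rfl j : Fin k))) ∈ Bad}
      ≤ d * iidProb μ {S : Fin k → X × Bool | ∀ i, i ∈ A ↔ (S i).1 ∈ g} := by
  set e := A.orderIsoOfFin rfl with he
  set N := (Finset.univ : Finset {i : Fin k // i ∈ A}).card with hN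
  set P : ({i : Fin k // i ∈ A} → X × Bool) → Prop := fun U =>
    (∀ i : {i : Fin k // i ∈ A}, (U i).1 ∈ g) ∧ ((fun j => U (e j)) ∈ Bad) with hP
  set P' : ({i : Fin k // i ∈ A} → X × Bool) → Prop := fun U =>
    ∀ i : {i : Fin k // i ∈ A}, (U i).1 ∈ g with hP'
  set Q : ({i : Fin k // i ∉ A} → X × Bool) → Prop := fun V =>
    ∀ i : {i : Fin k // i ∉ A}, (V i).1 ∉ g with hQ
  clear_value P P' Q
  -- membership splitting
  have hcond1 : ∀ S : Fin k → X × Bool, (∀ i, i ∈ A ↔ (S i).1 ∈ g) ↔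
      ((∀ i : {i : Fin k // i ∈ A}, (S i.1).1 ∈ g) ∧
        (∀ i : {i : Fin k // i ∉ A}, (S i.1).1 ∉ g)) := by
    intro S
    constructor
    · intro hc
      exact ⟨fun i => (hc i.1).mp i.2, fun i hig => i.2 ((hc i.1).mpr hig)⟩
    · rintro ⟨h1, h2⟩ i
      constructor
      · intro hi; exact h1 ⟨i, hi⟩
      · intro hig
        by_contra hi
        exact h2 ⟨i, hi⟩ hig
  -- step 1+2 : split for E_A
  have hEA : iidProb μ {S : Fin k → X × Bool | (∀ i, i ∈ A ↔ (S i).1 ∈ g) ∧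
        (fun j => S ((e j : Fin k))) ∈ Bad}
      = (∑' U : {i : Fin k // i ∈ A} → X × Bool, if P U then ∏ i, μ (U i) else 0) *
        (∑' V : {i : Fin k // i ∉ A} → X × Bool, if Q V then ∏ i, μ (V i) else 0) := by
    have hs := iid_split (⇑μ) A P Q
    rw [← hs]
    apply tsum_congr
    intro S
    rw [Set.indicator_apply]
    apply if_congr _ rfl rfl
    simp only [hP, hQ, Set.mem_setOf_eq]
    constructor
    · rintro ⟨hc1, hc2⟩
      have := (hcond1 S).mp hc1
      exact ⟨⟨this.1, hc2⟩, this.2⟩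
    · rintro ⟨⟨hin, hc2⟩, hout⟩
      exact ⟨(hcond1 S).mpr ⟨hin, hout⟩, hc2⟩
  -- split for P_A
  have hPA : iidProb μ {S : Fin k → X × Bool | ∀ i, i ∈ A ↔ (S i).1 ∈ g}
      = (∑' U : {i : Fin k // i ∈ A} → X × Bool, if P' U then ∏ i, μ (U i) else 0) *
        (∑' V : {i : Fin k // i ∉ A} → X × Bool, if Q V then ∏ i, μ (V i) else 0) := by
    have hs := iid_split (⇑μ) A P' Q
    rw [← hs]
    apply tsum_congr
    intro S
    rw [Set.indicator_apply]
    apply if_congr _ rfl rfl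
    simp only [hP', hQ, Set.mem_setOf_eq]
    exact (hcond1 S)
  -- factor q^N out of the in-part
  have hfac : ∀ (R : ({i : Fin k // i ∈ A} → X × Bool) → Prop),
      (∀ U, R U → ∀ i : {i : Fin k // i ∈ A}, (U i).1 ∈ g) →
      (∑' U : {i : Fin k // i ∈ A} → X × Bool, if R U then ∏ i, μ (U i) else 0)
      = (∑' U : {i : Fin k // i ∈ A} → X × Bool, if R U then ∏ i, ν (U i) else 0) * q ^ N := by
    intro R hR
    rw [← ENNReal.tsum_mul_right]
    apply tsum_congr
    intro U
    by_cases hRU : R U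
    · rw [if_pos hRU, if_pos hRU]
      calc ∏ i, μ (U i) = ∏ i : {i : Fin k // i ∈ A}, (ν (U i) * q) :=
            Finset.prod_congr rfl fun i _ => (hμν (U i) (hR U hRU i)).symm
        _ = (∏ i, ν (U i)) * q ^ N := by
            rw [Finset.prod_mul_distrib, Finset.prod_const, hN]
    · rw [if_neg hRU, if_neg hRU, zero_mul]
  -- reindexing to Fin A.card
  have hreindex : ∀ (T : Set (Fin A.card → X × Bool)),
      (∑' U : {i : Fin k // i ∈ A} → X × Bool,
        if (fun j => U (e j)) ∈ T then ∏ i, ν (U i) else 0)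
      = ∑' S' : Fin A.card → X × Bool, if S' ∈ T then ∏ j, ν (S' j) else 0 := by
    intro T
    set ec := Equiv.arrowCongr e.toEquiv (Equiv.refl (X × Bool)) with hec
    rw [← ec.tsum_eq]
    apply tsum_congr
    intro S'
    have h1 : (fun j => (ec S') (e j)) = S' := by
      funext j
      simp [hec, Equiv.arrowCongr]
    have h2 : (∏ i, ν ((ec S') i)) = ∏ j, ν (S' j) := by
      have := Equiv.prod_comp e.toEquiv.symm (fun j => ν (S' j))
      rw [← this]
      apply Finset.prod_congr rfl
      intro i _
      simp [hec, Equiv.arrowCongr]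
    rw [h1, h2]
  -- bound the Bad in-part
  have hGP : (∑' U : {i : Fin k // i ∈ A} → X × Bool, if P U then ∏ i, ν (U i) else 0)
      ≤ d := by
    calc (∑' U : {i : Fin k // i ∈ A} → X × Bool, if P U then ∏ i, ν (U i) else 0)
        ≤ ∑' U : {i : Fin k // i ∈ A} → X × Bool,
            if (fun j => U (e j)) ∈ Bad then ∏ i, ν (U i) else 0 := by
          refine Summable.tsum_le_tsum (fun U => ?_) ENNReal.summable ENNReal.summable
          by_cases hPU : P U
          · have hPU2 : (fun j => U (e j)) ∈ Bad := by
              rw [hP] at hPU; exact hPU.2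
            rw [if_pos hPU, if_pos hPU2]
          · rw [if_neg hPU]; exact zero_le
      _ = ∑' S' : Fin A.card → X × Bool, if S' ∈ Bad then ∏ j, ν (S' j) else 0 :=
          hreindex Bad
      _ = iidProb ν Bad := by
          unfold iidProb
          apply tsum_congr
          intro S'
          rw [Set.indicator_apply]
      _ ≤ d := hBad
  -- the all-in part is 1
  have hGP' : (∑' U : {i : Fin k // i ∈ A} → X × Bool,
      if P' U then ∏ i, ν (U i) else 0) = 1 := by
    have hru := hreindex Set.univ
    simp only [Set.mem_univ, if_true] at hru
    have h1 : (∑' U : {i : Fin k // i ∈ A} → X × Bool, if P' U then ∏ i, ν (U i) else 0)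
        = ∑' U : {i : Fin k // i ∈ A} → X × Bool, ∏ i, ν (U i) := by
      apply tsum_congr
      intro U
      by_cases hPU : P' U
      · rw [if_pos hPU]
      · rw [if_neg hPU]
        simp only [hP', not_forall] at hPU
        obtain ⟨i0, hi0⟩ := hPU
        symm
        exact Finset.prod_eq_zero (Finset.mem_univ i0) (hν0 (U i0) hi0)
    rw [h1, hru, tsum_prod_fin (fun _ z => ν z)]
    simp [PMF.tsum_coe]
  -- combine
  have hPin : ∀ U, P U → ∀ i : {i : Fin k // i ∈ A}, (U i).1 ∈ g := by
    intro U hU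
    rw [hP] at hU
    exact hU.1
  have hP'in : ∀ U, P' U → ∀ i : {i : Fin k // i ∈ A}, (U i).1 ∈ g := by
    intro U hU
    rw [hP'] at hU
    exact hU
  rw [hEA, hPA, hfac P hPin, hfac P' hP'in, hGP']
  rw [one_mul]
  calc (∑' U : {i : Fin k // i ∈ A} → X × Bool, if P U then ∏ i, ν (U i) else 0) * q ^ N *
        (∑' V : {i : Fin k // i ∉ A} → X × Bool, if Q V then ∏ i, μ (V i) else 0)
      ≤ d * q ^ N *
        (∑' V : {i : Fin k // i ∉ A} → X × Bool, if Q V then ∏ i, μ (V i) else 0) :=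
        mul_le_mul_left (mul_le_mul_left hGP _) _
    _ = d * (q ^ N *
        (∑' V : {i : Fin k // i ∉ A} → X × Bool, if Q V then ∏ i, μ (V i) else 0)) := by
        rw [mul_assoc]

end Infra7

/-- Under the stated uniform-convergence-type hypotheses on `k_G` and `k`,
the `k`-sample distinguisher `A_{g,h,ε'}` accepts with probability at least `1 - 2δ'` on inputs
generated from the modeled distribution `D̃ = D(p̃)` (with `p_i = p̃ x_i`). -/
theorem distinguisher_accepts_on_modeled {X : Type*} [Nonempty X]
    (f : X × unitInterval → unitInterval) (L : LossFunction X) (hf : FProper f L)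
    (D : PMF (X × Bool)) (pt : X → unitInterval) (g : Set X)
    (hgD : ∃ z : X × Bool, z.1 ∈ g ∧ D z ≠ 0)
    (h : X → unitInterval) (ε' δ' : ℝ)
    (hε' : ε' ∈ Set.Ioo (0:ℝ) 1) (hδ' : δ' ∈ Set.Ioo (0:ℝ) 1)
    (kG : ℕ)
    (hkG : ∀ (r : ℕ) (hr : r ≠ 0), kG ≤ r → ∀ D' : PMF (X × Bool),
      1 - ENNReal.ofReal δ' ≤ iidProb D' {S' : Fin r → X × Bool |
        |(L.loss (empDist hr S') h : ℝ) - (L.loss D' h : ℝ)| ≤ ε' ∧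
        |(L.loss (empDist hr S') (fun x => f (x, pt x)) : ℝ) -
          (L.loss D' (fun x => f (x, pt x)) : ℝ)| ≤ ε'})
    (k : ℕ)
    (hk : 1 - ENNReal.ofReal δ' ≤ iidProb (D.map Prod.fst)
      {T : Fin k → X | kG ≤ (Finset.univ.filter fun i : Fin k => T i ∈ g).card})
 :
    1 - ENNReal.ofReal (2 * δ') ≤ iidProb (modeled D pt)
      {S : Fin k → X × Bool |
        distinguisher L f g h ε' (fun i => ((S i).1, (S i).2, pt ((S i).1))) = true} := by
  have hmarg : (modeled D pt).map Prod.fst = D.map Prod.fst := marginal_modeled D pt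
  set μ := modeled D pt with hμdef
  set fpt : X → unitInterval := fun x => f (x, pt x) with hfpt
  -- the conditional distribution exists
  have hgμ : ∃ z : X × Bool, z.1 ∈ g ∧ μ z ≠ 0 := by
    obtain ⟨⟨x, y⟩, hxg, hDz⟩ := hgD
    have hmx : (D.map Prod.fst) x ≠ 0 := by
      rw [map_fst_apply]
      intro hc
      rw [add_eq_zero] at hc
      cases y
      · exact hDz hc.2
      · exact hDz hc.1
    have hμx : μ (x, true) + μ (x, false) ≠ 0 := by
      rw [← map_fst_apply, hmarg]
      exact hmx
    by_cases h1 : μ (x, true) = 0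
    · refine ⟨(x, false), hxg, ?_⟩
      intro hc
      exact hμx (by rw [h1, hc, add_zero])
    · exact ⟨(x, true), hxg, h1⟩
  set ν := condOn μ g hgμ with hνdef
  -- conditional probabilities of ν agree with pt on its support
  have hpt : ∀ x ∈ Supp ν, condProb ν x = pt x := by
    intro x hx
    obtain ⟨b, hb⟩ := hx
    have hmem := (PMF.filter_apply_ne_zero_iff
      (p := μ) (s := {z : X × Bool | z.1 ∈ g}) hgμ (x, b)).mp hb
    have hxg : x ∈ g := hmem.1
    have hμxb : μ (x, b) ≠ 0 := (PMF.mem_support_iff μ _).mp hmem.2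
    have hmx : (D.map Prod.fst) x ≠ 0 := by
      rw [← hmarg, map_fst_apply]
      intro hc
      rw [add_eq_zero] at hc
      cases b
      · exact hμxb hc.2
      · exact hμxb hc.1
    rw [hνdef, condProb_condOn μ g hgμ x hxg, hμdef]
    exact condProb_modeled D pt x hmx
  have hloss : ∀ h' : X → unitInterval, L.loss ν fpt ≤ L.loss ν h' :=
    loss_fpt_le f L hf ν pt hpt
  -- the bad events for the conditional samples
  set Bad : (r : ℕ) → Set (Fin r → X × Bool) := fun r =>
    {S' | ∃ hr : r ≠ 0, ¬(|(L.loss (empDist hr S') h : ℝ) - (L.loss ν h : ℝ)| ≤ ε' ∧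
      |(L.loss (empDist hr S') fpt : ℝ) - (L.loss ν fpt : ℝ)| ≤ ε')} with hBaddef
  have hBadLe : ∀ r : ℕ, kG ≤ r → iidProb ν (Bad r) ≤ ENNReal.ofReal δ' := by
    intro r hkGr
    by_cases hr : r = 0
    · subst hr
      have hempty : Bad 0 = (∅ : Set (Fin 0 → X × Bool)) := by
        ext S'
        simp [hBaddef]
      rw [hempty]
      unfold iidProb
      simp
    · have hgood := hkG r hr hkGr ν
      have hcompl : Bad r = {S' : Fin r → X × Bool |
          |(L.loss (empDist hr S') h : ℝ) - (L.loss ν h : ℝ)| ≤ ε' ∧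
          |(L.loss (empDist hr S') fpt : ℝ) - (L.loss ν fpt : ℝ)| ≤ ε'}ᶜ := by
        ext S'
        simp only [hBaddef, Set.mem_setOf_eq, Set.mem_compl_iff]
        constructor
        · rintro ⟨hr', hne⟩
          exact hne
        · intro hne
          exact ⟨hr, hne⟩
      rw [hcompl]
      exact compl_prob_le ν _ _ hgood
  -- the event of catching at least kG points in g
  set B : Set (Fin k → X × Bool) :=
    {S | (fun i => (S i).1) ∈
      {T : Fin k → X | kG ≤ (Finset.univ.filter fun i : Fin k => T i ∈ g).card}} with hBdef
  have hBle : iidProb μ Bᶜ ≤ ENNReal.ofReal δ' := by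
    apply compl_prob_le
    rw [← hmarg] at hk
    rw [iid_fst μ _] at hk
    exact hk
  -- the bad events for samples, indexed by the index set landing in g
  set EA : Finset (Fin k) → Set (Fin k → X × Bool) := fun A =>
    {S | (∀ i, i ∈ A ↔ (S i).1 ∈ g) ∧
      (fun j => S ((A.orderIsoOfFin rfl j : Fin k))) ∈ Bad A.card} with hEAdef
  set PA : Finset (Fin k) → Set (Fin k → X × Bool) := fun A =>
    {S | ∀ i, i ∈ A ↔ (S i).1 ∈ g} with hPAdef
  set As : Finset (Finset (Fin k)) :=
    Finset.univ.filter (fun A : Finset (Fin k) => kG ≤ A.card) with hAs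
  have hEAbound : ∀ A ∈ As, iidProb μ (EA A) ≤ ENNReal.ofReal δ' * iidProb μ (PA A) := by
    intro A hA
    have hAcard : kG ≤ A.card := (Finset.mem_filter.mp hA).2
    exact iid_EA_bound μ ν g (groupMass μ g)
      (fun z hz => mul_groupMass μ g hgμ hz)
      (fun z hz => condOn_apply_of_not_mem μ g hgμ hz)
      A (Bad A.card) (ENNReal.ofReal δ') (hBadLe A.card hAcard)
  have hsum : ∑ A ∈ As, iidProb μ (PA A) ≤ 1 := by
    calc ∑ A ∈ As, iidProb μ (PA A) ≤ ∑ A : Finset (Fin k), iidProb μ (PA A) :=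
          Finset.sum_le_sum_of_subset (Finset.subset_univ As)
      _ = 1 := iid_PA_sum μ g
  -- containment of the rejection event
  have hsubset : {S : Fin k → X × Bool |
      distinguisher L f g h ε' (fun i => ((S i).1, (S i).2, pt ((S i).1))) = true}ᶜ
      ⊆ Bᶜ ∪ ⋃ A ∈ As, EA A := by
    intro S hS
    by_cases hSB : S ∈ B
    · right
      set inp : Fin k → X × Bool × unitInterval :=
        fun i => ((S i).1, (S i).2, pt ((S i).1)) with hinp
      have hdist : distinguisher L f g h ε' inp ≠ true := hS
      have hne : (Finset.univ.filter fun i : Fin k => (inp i).1 ∈ g).Nonempty := by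
        by_contra hc
        apply hdist
        unfold distinguisher
        rw [dif_neg hc]
      set A0 : Finset (Fin k) := Finset.univ.filter (fun i => (inp i).1 ∈ g) with hA0
      have hr0 : A0.card ≠ 0 := Finset.card_ne_zero.mpr hne
      have hkGA : kG ≤ A0.card := hSB
      -- the empirical distributions agree
      have hempeq : subEmp inp g hne
          = empDist hr0 (fun j => S ((A0.orderIsoOfFin rfl j : Fin k))) := by
        unfold subEmp empDist
        have hmapfun : (fun i : Fin k => ((inp i).1, (inp i).2.1)) = S := by
          funext i
          exact Prod.mk.eta
        rw [hmapfun, uniformOfFinset_eq_map _ hne, PMF.map_comp]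
        rfl
      refine Set.mem_iUnion₂.mpr ⟨A0, Finset.mem_filter.mpr ⟨Finset.mem_univ _, hkGA⟩, ?_⟩
      refine ⟨fun i => by simp [hA0, Finset.mem_filter, hinp], ?_⟩
      -- membership in Bad A0.card
      refine ⟨hr0, ?_⟩
      rintro ⟨hc1, hc2⟩
      apply hdist
      unfold distinguisher
      rw [dif_pos hne, decide_eq_true_eq]
      rw [← hempeq] at hc1 hc2
      -- locality: fg agrees with fpt on the support of the subsample
      have hfg : L.loss (subEmp inp g hne) (fg f inp) = L.loss (subEmp inp g hne) fpt := by
        apply L.locality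
        intro x hx
        obtain ⟨y, hy⟩ := hx
        have hex : ∃ i : Fin k, (x, y) = ((inp i).1, (inp i).2.1) := by
          by_contra hcon
          push_neg at hcon
          apply hy
          unfold subEmp
          rw [PMF.map_apply]
          apply ENNReal.tsum_eq_zero.mpr
          intro i
          rw [if_neg (hcon i)]
        obtain ⟨i, hieq⟩ := hex
        have hxS : (inp i).1 = x := (congrArg Prod.fst hieq).symm
        have hne2 : (Finset.univ.filter fun i' : Fin k => (inp i').1 = x).Nonempty :=
          ⟨i, Finset.mem_filter.mpr ⟨Finset.mem_univ _, hxS⟩⟩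
        unfold fg
        rw [dif_pos hne2]
        have hmin := (Finset.univ.filter fun i' : Fin k => (inp i').1 = x).min'_mem hne2
        rw [Finset.mem_filter] at hmin
        have hval : (inp ((Finset.univ.filter
            fun i' : Fin k => (inp i').1 = x).min' hne2)).2.2 = pt x := by
          calc (inp ((Finset.univ.filter fun i' : Fin k => (inp i').1 = x).min' hne2)).2.2
              = pt ((inp ((Finset.univ.filter
                  fun i' : Fin k => (inp i').1 = x).min' hne2)).1) := rfl
            _ = pt x := by rw [hmin.2]
        rw [hval]
      -- the chain of inequalities
      have e1 : (L.loss (subEmp inp g hne) (fg f inp) : ℝ)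
          = (L.loss (subEmp inp g hne) fpt : ℝ) := by rw [hfg]
      have e3 : (L.loss ν fpt : ℝ) ≤ (L.loss ν h : ℝ) := Subtype.coe_le_coe.mpr (hloss h)
      have e2 := abs_le.mp hc2
      have e4 := abs_le.mp hc1
      rw [e1]
      linarith [e2.1, e2.2, e4.1, e4.2]
    · left
      exact hSB
  -- put everything together
  have hAccCompl : iidProb μ {S : Fin k → X × Bool |
      distinguisher L f g h ε' (fun i => ((S i).1, (S i).2, pt ((S i).1))) = true}ᶜ
      ≤ ENNReal.ofReal (2 * δ') := by
    calc iidProb μ {S : Fin k → X × Bool |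
        distinguisher L f g h ε' (fun i => ((S i).1, (S i).2, pt ((S i).1))) = true}ᶜ
        ≤ iidProb μ (Bᶜ ∪ ⋃ A ∈ As, EA A) := iidProb_mono μ hsubset
      _ ≤ iidProb μ Bᶜ + iidProb μ (⋃ A ∈ As, EA A) := iidProb_union_le μ _ _
      _ ≤ ENNReal.ofReal δ' + ∑ A ∈ As, iidProb μ (EA A) :=
          add_le_add hBle (iidProb_biUnion_le μ As EA)
      _ ≤ ENNReal.ofReal δ' + ∑ A ∈ As, ENNReal.ofReal δ' * iidProb μ (PA A) :=
          add_le_add_right (Finset.sum_le_sum hEAbound) _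
      _ = ENNReal.ofReal δ' + ENNReal.ofReal δ' * ∑ A ∈ As, iidProb μ (PA A) := by
          rw [Finset.mul_sum]
      _ ≤ ENNReal.ofReal δ' + ENNReal.ofReal δ' * 1 :=
          add_le_add_right (mul_le_mul_right hsum _) _
      _ = ENNReal.ofReal (2 * δ') := by
          rw [mul_one, ← ENNReal.ofReal_add hδ'.1.le hδ'.1.le, two_mul]
  have hAC := iidProb_add_compl μ {S : Fin k → X × Bool |
      distinguisher L f g h ε' (fun i => ((S i).1, (S i).2, pt ((S i).1))) = true}
  rw [tsub_le_iff_right]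
  calc (1 : ℝ≥0∞) = iidProb μ {S : Fin k → X × Bool |
        distinguisher L f g h ε' (fun i => ((S i).1, (S i).2, pt ((S i).1))) = true}
        + iidProb μ {S : Fin k → X × Bool |
        distinguisher L f g h ε' (fun i => ((S i).1, (S i).2, pt ((S i).1))) = true}ᶜ :=
        hAC.symm
    _ ≤ _ + ENNReal.ofReal (2 * δ') := add_le_add_right hAccCompl _


end MultiPAC
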